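/- arXiv:2405.05344 — 2 statements merged into one kernel-verified Lean document; each statement's English description precedes it below -/
import Mathlib

section
/- Let $w$ be standard normal and define the soft thresholding risk $r(\mu;\tau) = \mathbb{E}(\eta_\tau(\mu + w) - \mu)^2$ where $\eta_\tau(x) = \mathrm{sign}(x)(|x|-\tau)_+$. Then $r(\mu;\tau) \le 1 + \tau^2$ for all $\mu \in \mathbb{R}$ and $\tau \ge 0$. -/
open MeasureTheory ProbabilityTheory

/-- The soft thresholding function `η_τ(x) = sign(x)(|x| - τ)₊`. -/
noncomputable def softThreshold (τ x : ℝ) : ℝ :=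
  Real.sign x * max (|x| - τ) 0

section Aux
open Real Set Filter Topology

noncomputable def phi (x : ℝ) : ℝ := Real.exp (-(1/2 : ℝ) * x ^ 2)

lemma gauss_pdf01 (x : ℝ) :
    gaussianPDFReal 0 1 x = (Real.sqrt (2 * π))⁻¹ * phi x := by
  simp only [gaussianPDFReal, phi, NNReal.coe_one, mul_one, sub_zero]
  congr 1
  ring_nf

lemma intphi : Integrable phi := integrable_exp_neg_mul_sq (by norm_num)

lemma intxphi : Integrable (fun x => x * phi x) :=
  integrable_mul_exp_neg_mul_sq (by norm_num)

lemma intx2phi : Integrable (fun x => x ^ 2 * phi x) := by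
  have := integrable_rpow_mul_exp_neg_mul_sq (b := 1/2) (by norm_num) (s := 2) (by norm_num)
  simpa [Real.rpow_natCast, phi] using this

lemma Jphi : ∫ x, phi x = Real.sqrt (2 * π) := by
  have := integral_gaussian (1/2)
  simp only [phi]
  rw [this]
  congr 1
  ring

lemma J1 : ∫ x, x * phi x = 0 := by
  have hmp : MeasurePreserving (fun x : ℝ => -x) volume volume :=
    ⟨measurable_neg, Measure.map_neg_eq_self volume⟩
  have hme : MeasurableEmbedding (fun x : ℝ => -x) :=
    (Homeomorph.neg ℝ).isClosedEmbedding.measurableEmbedding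
  have h := hmp.integral_comp hme (fun x => x * phi x)
  have heq : ∀ x : ℝ, (-x) * phi (-x) = -(x * phi x) := by
    intro x; simp [phi, neg_sq]
  simp only [heq, integral_neg] at h
  linarith

lemma tend0 : Tendsto (fun x : ℝ => -x * phi x) atTop (𝓝 0) := by
  have h := rpow_mul_exp_neg_mul_sq_isLittleO_exp_neg (b := 1/2) (by norm_num) 1
  have hc : Tendsto (fun x : ℝ => Real.exp (-(1/2) * x)) atTop (𝓝 0) :=
    Real.tendsto_exp_atBot.comp (tendsto_id.const_mul_atTop_of_neg (by norm_num))
  have h2 : Tendsto (fun x : ℝ => x ^ (1:ℝ) * Real.exp (-(1/2) * x ^ 2)) atTop (𝓝 0) :=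
    h.isBigO.trans_tendsto hc
  have h3 : Tendsto (fun x : ℝ => x * phi x) atTop (𝓝 0) := by
    refine h2.congr' ?_
    filter_upwards with x
    rw [Real.rpow_one]; rfl
  simpa using h3.neg

lemma hasDeriv_phi (x : ℝ) : HasDerivAt phi (-x * phi x) x := by
  have h1 : HasDerivAt (fun x : ℝ => -(1/2 : ℝ) * x ^ 2) (-(1/2) * (2 * x ^ 1)) x :=
    (hasDerivAt_pow 2 x).const_mul (-(1/2))
  have h2 := h1.exp
  convert h2 using 1
  · rfl
  simp only [phi]
  ring

lemma JIoi : ∫ x in Ioi (0:ℝ), (x ^ 2 - 1) * phi x = 0 := by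
  have hderiv : ∀ x ∈ Ici (0:ℝ), HasDerivAt (fun x => -x * phi x) ((x ^ 2 - 1) * phi x) x := by
    intro x _
    have h1 : HasDerivAt (fun x : ℝ => -x) (-1) x := (hasDerivAt_id x).neg
    have h2 := h1.mul (hasDeriv_phi x)
    exact h2.congr_deriv (by ring)
  have hint : IntegrableOn (fun x => (x ^ 2 - 1) * phi x) (Ioi (0:ℝ)) := by
    have h := intx2phi.sub intphi
    have : (fun x => (x ^ 2 - 1) * phi x) = fun x => x ^ 2 * phi x - phi x := by
      funext x; ring
    rw [this]
    exact h.integrableOn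
  have h := integral_Ioi_of_hasDerivAt_of_tendsto' hderiv hint tend0
  rw [h]
  norm_num

lemma J2 : ∫ x, x ^ 2 * phi x = Real.sqrt (2 * π) := by
  have habs : ∀ g : ℝ → ℝ, (∀ x : ℝ, g |x| = g x) → ∫ x, g x = 2 * ∫ x in Ioi (0:ℝ), g x := by
    intro g hg
    rw [← integral_comp_abs (f := g)]
    congr 1; funext x; rw [hg]
  have e1 : ∫ x, x ^ 2 * phi x = 2 * ∫ x in Ioi (0:ℝ), x ^ 2 * phi x := by
    refine habs _ (fun x => ?_)
    simp [phi, sq_abs]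
  have e2 : ∫ x, phi x = 2 * ∫ x in Ioi (0:ℝ), phi x := by
    refine habs _ (fun x => ?_)
    simp [phi, sq_abs]
  have e3 : ∫ x in Ioi (0:ℝ), x ^ 2 * phi x = ∫ x in Ioi (0:ℝ), phi x := by
    have h := JIoi
    have hfun : (fun x : ℝ => (x ^ 2 - 1) * phi x) = fun x => x ^ 2 * phi x - phi x := by
      funext x; ring
    rw [hfun, integral_sub intx2phi.integrableOn intphi.integrableOn] at h
    linarith
  rw [e1, e3, ← e2, Jphi]



lemma gauss01_eq : gaussianReal 0 1
    = (volume : Measure ℝ).withDensity (fun x => ((gaussianPDFReal 0 1 x).toNNReal : ENNReal)) := by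
  rw [gaussianReal_of_var_ne_zero 0 one_ne_zero]
  rfl

lemma integral_gauss01 (g : ℝ → ℝ) :
    ∫ x, g x ∂(gaussianReal 0 1) = ∫ x, gaussianPDFReal 0 1 x * g x := by
  rw [gauss01_eq,
    integral_withDensity_eq_integral_smul (measurable_gaussianPDFReal 0 1).real_toNNReal]
  congr 1; funext x
  rw [NNReal.smul_def, smul_eq_mul, Real.coe_toNNReal _ (gaussianPDFReal_nonneg 0 1 x)]

lemma integrable_gauss01 {g : ℝ → ℝ}
    (hg : Integrable (fun x => gaussianPDFReal 0 1 x * g x)) :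
    Integrable g (gaussianReal 0 1) := by
  rw [gauss01_eq,
    integrable_withDensity_iff_integrable_smul (measurable_gaussianPDFReal 0 1).real_toNNReal]
  refine hg.congr ?_
  filter_upwards with x
  rw [NNReal.smul_def, smul_eq_mul, Real.coe_toNNReal _ (gaussianPDFReal_nonneg 0 1 x)]

lemma soft_eq (τ x : ℝ) (hτ : 0 ≤ τ) :
    softThreshold τ x = x - max (-τ) (min τ x) := by
  unfold softThreshold
  rcases lt_trichotomy x 0 with hx | hx | hx
  · rw [Real.sign_of_neg hx, abs_of_neg hx]
    rcases le_or_gt x (-τ) with h | h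
    · rw [max_eq_left (by linarith : (0:ℝ) ≤ -x - τ), min_eq_right (by linarith),
        max_eq_left (by linarith : x ≤ -τ)]
      ring
    · rw [max_eq_right (by linarith : -x - τ ≤ 0), min_eq_right (by linarith),
        max_eq_right h.le]
      ring
  · subst hx
    simp [Real.sign_zero, min_eq_right hτ, max_eq_right (by linarith : -τ ≤ (0:ℝ))]
  · rw [Real.sign_of_pos hx, abs_of_pos hx]
    rcases le_or_gt τ x with h | h
    · rw [max_eq_left (by linarith), min_eq_left h, max_eq_right (by linarith)]
      ring
    · rw [max_eq_right (by linarith : x - τ ≤ 0), min_eq_right h.le,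
        max_eq_right (by linarith)]
      ring

lemma key_bound (μ τ w : ℝ) (hτ : 0 ≤ τ) :
    (softThreshold τ (μ + w) - μ) ^ 2
      ≤ w ^ 2 + τ ^ 2 - 2 * max (-τ) (min τ μ) * w := by
  rw [soft_eq τ (μ + w) hτ]
  set P := max (-τ) (min τ (μ + w)) with hP
  set c := max (-τ) (min τ μ) with hc
  have hPabs : -τ ≤ P ∧ P ≤ τ := by
    constructor
    · exact le_max_left _ _
    · exact max_le (by linarith) (min_le_left _ _)
  have hcabs : -τ ≤ c ∧ c ≤ τ := ⟨le_max_left _ _, max_le (by linarith) (min_le_left _ _)⟩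
  have hmono : 0 ≤ w * (P - c) := by
    rcases le_total 0 w with hw | hw
    · have : c ≤ P := by
        apply max_le_max le_rfl
        exact min_le_min le_rfl (by linarith)
      exact mul_nonneg hw (by linarith)
    · have : P ≤ c := by
        apply max_le_max le_rfl
        exact min_le_min le_rfl (by linarith)
      nlinarith [mul_nonneg (neg_nonneg.2 hw) (sub_nonneg.2 this)]
  have hP2 : P ^ 2 ≤ τ ^ 2 := by nlinarith [hPabs.1, hPabs.2]
  nlinarith [hmono, hP2]


end Aux

section Main
open Real Set Filter Topology

/-- The soft thresholding risk satisfies `r(μ; τ) = E(η_τ(μ + w) - μ)² ≤ 1 + τ²`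
for `w` standard normal. -/
theorem softThreshold_risk_le (μ τ : ℝ) (hτ : 0 ≤ τ) :
    ∫ w, (softThreshold τ (μ + w) - μ) ^ 2 ∂(gaussianReal 0 1) ≤ 1 + τ ^ 2 := by
  set c := max (-τ) (min τ μ) with hc
  have hs : (0:ℝ) < Real.sqrt (2 * π) := Real.sqrt_pos.mpr (by positivity)
  set s := Real.sqrt (2 * π) with hsdef
  have hvol : Integrable (fun x : ℝ => gaussianPDFReal 0 1 x * (x ^ 2 + τ ^ 2 - 2 * c * x)) := by
    have h : Integrable (fun x : ℝ => s⁻¹ * (x ^ 2 * phi x) + τ ^ 2 * (s⁻¹ * phi x)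
        - 2 * c * s⁻¹ * (x * phi x)) :=
      ((intx2phi.const_mul s⁻¹).add ((intphi.const_mul s⁻¹).const_mul (τ ^ 2))).sub
        (intxphi.const_mul (2 * c * s⁻¹))
    refine h.congr ?_
    filter_upwards with x
    rw [gauss_pdf01]
    ring
  have hmaj : Integrable (fun w : ℝ => w ^ 2 + τ ^ 2 - 2 * c * w) (gaussianReal 0 1) :=
    integrable_gauss01 hvol
  have hle := integral_mono_of_nonneg
    (Filter.Eventually.of_forall fun w => sq_nonneg _) hmaj
    (Filter.Eventually.of_forall fun w => key_bound μ τ w hτ)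
  refine hle.trans ?_
  rw [integral_gauss01]
  have heq : (fun x : ℝ => gaussianPDFReal 0 1 x * (x ^ 2 + τ ^ 2 - 2 * c * x))
      = fun x => s⁻¹ * (x ^ 2 * phi x) + τ ^ 2 * (s⁻¹ * phi x) - 2 * c * s⁻¹ * (x * phi x) := by
    funext x; rw [gauss_pdf01]; ring
  have hF : Integrable (fun x : ℝ => s⁻¹ * (x ^ 2 * phi x)) := intx2phi.const_mul s⁻¹
  have hG : Integrable (fun x : ℝ => τ ^ 2 * (s⁻¹ * phi x)) :=
    (intphi.const_mul s⁻¹).const_mul (τ ^ 2)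
  have hH : Integrable (fun x : ℝ => 2 * c * s⁻¹ * (x * phi x)) :=
    intxphi.const_mul (2 * c * s⁻¹)
  have hFG : Integrable (fun x : ℝ => s⁻¹ * (x ^ 2 * phi x) + τ ^ 2 * (s⁻¹ * phi x)) := hF.add hG
  rw [heq, integral_sub hFG hH, integral_add hF hG,
    integral_const_mul, integral_const_mul, integral_const_mul, integral_const_mul,
    J1, J2, Jphi, inv_mul_cancel₀ hs.ne']
  ring_nf
  norm_num

end Main
end

section
/- Let $w$ be standard normal and define $r(0;\tau) = \mathbb{E}(\eta_\tau(w))^2$ where $\eta_\tau(x) = \mathrm{sign}(x)(|x|-\tau)_+$. Then $r(0;\tau) \le e^{-\tau^2/2}$ for all $\tau \ge 0$. -/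
open MeasureTheory ProbabilityTheory Real Filter Set

lemma st_integrable_sq : Integrable (fun x : ℝ => x ^ 2 * Real.exp (-x ^ 2 / 2)) := by
  refine (integrable_rpow_mul_exp_neg_mul_sq (b := 1/2) (by norm_num) (s := 2)
    (by norm_num)).congr (Filter.Eventually.of_forall fun x => ?_)
  show x ^ (2:ℝ) * Real.exp (-(1/2) * x ^ 2) = _
  rw [show ((2:ℝ)) = ((2:ℕ):ℝ) by norm_num, Real.rpow_natCast]
  ring_nf

lemma st_integrable_exp : Integrable (fun x : ℝ => Real.exp (-x ^ 2 / 2)) := by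
  refine (integrable_exp_neg_mul_sq (b := 1/2) (by norm_num)).congr
    (Filter.Eventually.of_forall fun x => ?_)
  ring_nf

lemma st_tendsto_top : Tendsto (fun x : ℝ => -x * Real.exp (-x ^ 2 / 2)) atTop (nhds 0) := by
  refine squeeze_zero_norm (fun x => ?_)
    ((tendsto_rpow_abs_mul_exp_neg_mul_sq_cocompact (a := 1/2) (by norm_num) 1).mono_left
      _root_.atTop_le_cocompact)
  rw [Real.rpow_one, show -(1/2 : ℝ) * x ^ 2 = -x ^ 2 / 2 by ring, norm_mul, norm_neg,
    Real.norm_eq_abs, Real.norm_eq_abs, abs_of_nonneg (Real.exp_pos _).le]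

lemma st_tendsto_bot : Tendsto (fun x : ℝ => -x * Real.exp (-x ^ 2 / 2)) atBot (nhds 0) := by
  refine squeeze_zero_norm (fun x => ?_)
    ((tendsto_rpow_abs_mul_exp_neg_mul_sq_cocompact (a := 1/2) (by norm_num) 1).mono_left
      _root_.atBot_le_cocompact)
  rw [Real.rpow_one, show -(1/2 : ℝ) * x ^ 2 = -x ^ 2 / 2 by ring, norm_mul, norm_neg,
    Real.norm_eq_abs, Real.norm_eq_abs, abs_of_nonneg (Real.exp_pos _).le]

lemma st_hasDerivAt (x : ℝ) :
    HasDerivAt (fun y : ℝ => -y * Real.exp (-y ^ 2 / 2))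
      ((x ^ 2 - 1) * Real.exp (-x ^ 2 / 2)) x := by
  have h1 := ((hasDerivAt_pow 2 x).fun_neg.div_const 2)
  have h3 := (hasDerivAt_neg x).fun_mul h1.exp
  refine h3.congr_deriv ?_
  push_cast
  ring

lemma st_integrable_sq_sub_one :
    Integrable (fun x : ℝ => (x ^ 2 - 1) * Real.exp (-x ^ 2 / 2)) := by
  have := st_integrable_sq.sub st_integrable_exp
  refine this.congr (Filter.Eventually.of_forall fun x => ?_)
  simp only [Pi.sub_apply]
  ring

lemma st_integral_sq_sub_one :
    ∫ x : ℝ, (x ^ 2 - 1) * Real.exp (-x ^ 2 / 2) = 0 := by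
  rw [← intervalIntegral.integral_Iic_add_Ioi (b := (0:ℝ))
    st_integrable_sq_sub_one.integrableOn st_integrable_sq_sub_one.integrableOn,
    integral_Ioi_of_hasDerivAt_of_tendsto' (fun x _ => st_hasDerivAt x)
      st_integrable_sq_sub_one.integrableOn st_tendsto_top,
    integral_Iic_of_hasDerivAt_of_tendsto' (fun x _ => st_hasDerivAt x)
      st_integrable_sq_sub_one.integrableOn st_tendsto_bot]
  norm_num

lemma st_integral_exp : ∫ x : ℝ, Real.exp (-x ^ 2 / 2) = Real.sqrt (2 * Real.pi) := by
  have h := integral_gaussian (1/2)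
  rw [show Real.pi / (1/2) = 2 * Real.pi by ring] at h
  rw [← h]
  congr 1 with x
  ring_nf

lemma st_integral_sq :
    ∫ x : ℝ, x ^ 2 * Real.exp (-x ^ 2 / 2) = Real.sqrt (2 * Real.pi) := by
  have h : (fun x : ℝ => x ^ 2 * Real.exp (-x ^ 2 / 2)) =
      fun x => (x ^ 2 - 1) * Real.exp (-x ^ 2 / 2) + Real.exp (-x ^ 2 / 2) := by
    funext x; ring
  rw [h, integral_add st_integrable_sq_sub_one st_integrable_exp, st_integral_sq_sub_one,
    st_integral_exp, zero_add]

/-- The soft thresholding risk at the origin satisfies `r(0; τ) = E(η_τ(w))² ≤ e^{-τ²/2}`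
for `w` standard normal. -/
theorem softThreshold_risk_at_zero_le (τ : ℝ) (hτ : 0 ≤ τ) :
    ∫ w, (softThreshold τ w) ^ 2 ∂(gaussianReal 0 1) ≤ Real.exp (-τ ^ 2 / 2) := by
  classical
  set f : ℝ → ℝ := fun x => (max (|x| - τ) 0) ^ 2 with hf
  set q : ℝ → ℝ := fun x => (max x 0) ^ 2 * Real.exp (-x ^ 2 / 2) with hq
  set c : ℝ := (Real.sqrt (2 * Real.pi))⁻¹ with hc
  have hc_pos : 0 < Real.sqrt (2 * Real.pi) := Real.sqrt_pos.mpr (by positivity)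
  -- step 1 : softThreshold squared is f
  have hst : ∀ x, (softThreshold τ x) ^ 2 = f x := by
    intro x
    rcases lt_trichotomy x 0 with h | h | h
    · rw [softThreshold, Real.sign_of_neg h]; ring
    · subst h
      have hm : max (-τ) 0 = 0 := max_eq_right (neg_nonpos.mpr hτ)
      simp [softThreshold, hf, hm]
    · rw [softThreshold, Real.sign_of_pos h]; ring
  -- step 2 : rewrite the gaussian integral as a Lebesgue integral
  have hmeas : Measurable fun x => (gaussianPDFReal 0 1 x).toNNReal :=
    (measurable_gaussianPDFReal 0 1).real_toNNReal
  have hMeq : gaussianReal 0 1 =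
      volume.withDensity fun x => ((gaussianPDFReal 0 1 x).toNNReal : ENNReal) := by
    rw [gaussianReal_of_var_ne_zero 0 one_ne_zero]; rfl
  have hpdf : ∀ x : ℝ, gaussianPDFReal 0 1 x = c * Real.exp (-x ^ 2 / 2) := by
    intro x
    rw [gaussianPDFReal, hc]
    norm_num
  have h1 : ∫ w, (softThreshold τ w) ^ 2 ∂(gaussianReal 0 1)
      = c * ∫ x, f x * Real.exp (-x ^ 2 / 2) := by
    rw [hMeq, integral_withDensity_eq_integral_smul hmeas, ← integral_const_mul]
    congr 1 with x
    rw [NNReal.smul_def, smul_eq_mul, Real.coe_toNNReal _ (gaussianPDFReal_nonneg 0 1 x),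
      hpdf x, hst x]
    ring
  -- integrability facts
  have hq_cont : Continuous q := by
    rw [hq]
    exact ((continuous_id.max continuous_const).pow 2).mul
      ((continuous_pow 2).neg.div_const 2).rexp
  have hq_nonneg : ∀ x, 0 ≤ q x := fun x =>
    mul_nonneg (pow_nonneg (le_max_right x 0) 2) (Real.exp_pos _).le
  have hq_int : Integrable q := by
    refine st_integrable_sq.mono' hq_cont.aestronglyMeasurable
      (Filter.Eventually.of_forall fun x => ?_)
    rw [Real.norm_eq_abs, abs_of_nonneg (hq_nonneg x)]
    have hmax : (max x 0) ^ 2 ≤ x ^ 2 := by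
      rcases le_total x 0 with h | h
      · rw [max_eq_right h]; simpa using sq_nonneg x
      · rw [max_eq_left h]
    simp only [hq]
    exact mul_le_mul_of_nonneg_right hmax (Real.exp_pos _).le
  have hf_cont : Continuous fun x => f x * Real.exp (-x ^ 2 / 2) := by
    simp only [hf]
    exact (((continuous_abs.sub continuous_const).max continuous_const).pow 2).mul
      ((continuous_pow 2).neg.div_const 2).rexp
  have hf_int : Integrable fun x => f x * Real.exp (-x ^ 2 / 2) := by
    refine st_integrable_sq.mono' hf_cont.aestronglyMeasurable
      (Filter.Eventually.of_forall fun x => ?_)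
    have hfx : 0 ≤ f x := sq_nonneg (max (|x| - τ) 0)
    rw [Real.norm_eq_abs, abs_of_nonneg (mul_nonneg hfx (Real.exp_pos _).le)]
    have hmax : max (|x| - τ) 0 ≤ |x| := max_le (by linarith [abs_nonneg x]) (abs_nonneg x)
    have hfle : f x ≤ x ^ 2 := by
      simp only [hf]
      calc (max (|x| - τ) 0) ^ 2 ≤ |x| ^ 2 :=
            pow_le_pow_left₀ (le_max_right _ _) hmax 2
        _ = x ^ 2 := sq_abs x
    exact mul_le_mul_of_nonneg_right hfle (Real.exp_pos _).le
  have hq_shift : Integrable fun x : ℝ => q (x - τ) := hq_int.comp_sub_right τ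
  have hq_shift_neg : Integrable fun x : ℝ => q (-x - τ) := by
    have := hq_shift.comp_neg
    simpa using this
  -- pointwise key inequality
  have key : ∀ x : ℝ, f x * Real.exp (-x ^ 2 / 2)
      ≤ Real.exp (-τ ^ 2 / 2) * (q (x - τ) + q (-x - τ)) := by
    intro x
    rcases le_or_gt |x| τ with h | h
    · have hf0 : f x = 0 := by
        simp only [hf]; rw [max_eq_right (by linarith : |x| - τ ≤ 0)]; ring
      rw [hf0, zero_mul]
      have h1 := hq_nonneg (x - τ)
      have h2 := hq_nonneg (-x - τ)
      have := Real.exp_pos (-τ ^ 2 / 2)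
      nlinarith
    · -- |x| > τ
      have habs : 0 < |x| - τ := by linarith
      have hfq : f x = (|x| - τ) ^ 2 := by simp only [hf]; rw [max_eq_left habs.le]
      have hexp : Real.exp (-x ^ 2 / 2)
          ≤ Real.exp (-τ ^ 2 / 2) * Real.exp (-(|x| - τ) ^ 2 / 2) := by
        rw [← Real.exp_add, Real.exp_le_exp]
        nlinarith [sq_abs x, abs_nonneg x]
      have hmain : f x * Real.exp (-x ^ 2 / 2)
          ≤ Real.exp (-τ ^ 2 / 2) * ((|x| - τ) ^ 2 * Real.exp (-(|x| - τ) ^ 2 / 2)) := by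
        rw [hfq]
        calc (|x| - τ) ^ 2 * Real.exp (-x ^ 2 / 2)
            ≤ (|x| - τ) ^ 2 * (Real.exp (-τ ^ 2 / 2) * Real.exp (-(|x| - τ) ^ 2 / 2)) :=
              mul_le_mul_of_nonneg_left hexp (by positivity)
          _ = Real.exp (-τ ^ 2 / 2) * ((|x| - τ) ^ 2 * Real.exp (-(|x| - τ) ^ 2 / 2)) := by ring
      refine hmain.trans (mul_le_mul_of_nonneg_left ?_ (Real.exp_pos _).le)
      have hqabs : q (|x| - τ) = (|x| - τ) ^ 2 * Real.exp (-(|x| - τ) ^ 2 / 2) := by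
        simp only [hq]; rw [max_eq_left habs.le]
      rw [← hqabs]
      rcases abs_cases x with ⟨hx, _⟩ | ⟨hx, _⟩
      · rw [hx]
        linarith [hq_nonneg (-x - τ)]
      · rw [hx]
        linarith [hq_nonneg (x - τ)]
  -- integral of the bound
  have hq_neg_eq : ∫ x : ℝ, q (-x - τ) = ∫ x : ℝ, q (x - τ) := by
    have := MeasureTheory.integral_neg_eq_self (fun y : ℝ => q (y - τ)) volume
    simpa using this
  have hq_shift_eq : ∫ x : ℝ, q (x - τ) = ∫ x : ℝ, q x :=
    integral_sub_right_eq_self q τ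
  have hq_val : (2 : ℝ) * ∫ x : ℝ, q x = Real.sqrt (2 * Real.pi) := by
    have hnegint : Integrable fun x : ℝ => q (-x) := hq_int.comp_neg
    have hadd : ∫ x : ℝ, (q x + q (-x)) = (∫ x : ℝ, q x) + ∫ x : ℝ, q (-x) :=
      integral_add hq_int hnegint
    have hneg : ∫ x : ℝ, q (-x) = ∫ x : ℝ, q x :=
      MeasureTheory.integral_neg_eq_self q volume
    have hsum : ∀ x : ℝ, q x + q (-x) = x ^ 2 * Real.exp (-x ^ 2 / 2) := by
      intro x
      simp only [hq, neg_sq]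
      rcases le_total x 0 with h | h
      · rw [max_eq_right h, max_eq_left (by linarith : (0:ℝ) ≤ -x)]; ring
      · rw [max_eq_left h, max_eq_right (by linarith : -x ≤ (0:ℝ))]; ring
    calc (2 : ℝ) * ∫ x : ℝ, q x = (∫ x : ℝ, q x) + ∫ x : ℝ, q (-x) := by rw [hneg]; ring
      _ = ∫ x : ℝ, (q x + q (-x)) := hadd.symm
      _ = ∫ x : ℝ, x ^ 2 * Real.exp (-x ^ 2 / 2) := by congr 1 with x; rw [hsum x]
      _ = Real.sqrt (2 * Real.pi) := st_integral_sq
  -- put everything together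
  have hbound : ∫ x, f x * Real.exp (-x ^ 2 / 2)
      ≤ Real.exp (-τ ^ 2 / 2) * Real.sqrt (2 * Real.pi) := by
    have hrhs_int : Integrable fun x : ℝ =>
        Real.exp (-τ ^ 2 / 2) * (q (x - τ) + q (-x - τ)) :=
      (hq_shift.add hq_shift_neg).const_mul _
    calc ∫ x, f x * Real.exp (-x ^ 2 / 2)
        ≤ ∫ x, Real.exp (-τ ^ 2 / 2) * (q (x - τ) + q (-x - τ)) :=
          integral_mono hf_int hrhs_int key
      _ = Real.exp (-τ ^ 2 / 2) * ((∫ x : ℝ, q (x - τ)) + ∫ x : ℝ, q (-x - τ)) := by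
          rw [integral_const_mul, integral_add hq_shift hq_shift_neg]
      _ = Real.exp (-τ ^ 2 / 2) * ((2:ℝ) * ∫ x : ℝ, q x) := by
          rw [hq_neg_eq, hq_shift_eq]; ring
      _ = Real.exp (-τ ^ 2 / 2) * Real.sqrt (2 * Real.pi) := by rw [hq_val]
  calc ∫ w, (softThreshold τ w) ^ 2 ∂(gaussianReal 0 1)
      = c * ∫ x, f x * Real.exp (-x ^ 2 / 2) := h1
    _ ≤ c * (Real.exp (-τ ^ 2 / 2) * Real.sqrt (2 * Real.pi)) := by
        apply mul_le_mul_of_nonneg_left hbound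
        rw [hc]; positivity
    _ = Real.exp (-τ ^ 2 / 2) := by
        rw [hc]
        field_simp
end
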